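/- Let a ∈ [0,1] and let μ_a be the probability measure on [0,1]² given by μ_a = a·(pushforward of Lebesgue measure on [0,1] under x ↦ (x,x)) + (1−a)·(pushforward of Lebesgue measure under x ↦ (x,1−x)) (the copula measure of a M + (1−a) W). Then the function f(x) = √2·cos(2πx) satisfies ∫₀¹ f = 0, ∫₀¹ f² = 1, and ∫_{[0,1]²} f(x) f(y) μ_a(d(x,y)) = 1. Hence the maximal correlation coefficient ρ₁ of μ_a equals 1, so Markov chains generated by copulas of the form a M + (1−a) W are not ρ-mixing. -/

import Mathlib

open MeasureTheory

/-- The unit interval `[0,1]` as a subset of `ℝ`. -/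
def I01 : Set ℝ := Set.Icc 0 1

/-- Lebesgue measure restricted to `[0,1]`. -/
noncomputable def μ01 : Measure ℝ := volume.restrict I01

/-- The copula measure of `a·M + (1−a)·W`: `a` times the uniform measure on the
diagonal plus `1−a` times the uniform measure on the antidiagonal of `[0,1]²`. -/
noncomputable def muMW (a : ℝ) : Measure (ℝ × ℝ) :=
  ENNReal.ofReal a • μ01.map (fun x => (x, x)) +
    ENNReal.ofReal (1 - a) • μ01.map (fun x => (x, 1 - x))

/- ### Auxiliary lemmas -/

lemma mu01_def : μ01 = volume.restrict I01 := rfl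

lemma I01_meas : MeasurableSet I01 := measurableSet_Icc

instance : IsFiniteMeasure μ01 := by
  rw [mu01_def, I01]
  exact ⟨by simp [Real.volume_Icc]⟩

lemma sub_meas : Measurable (fun x : ℝ => 1 - x) := measurable_const.sub measurable_id

/-- The map `x ↦ 1 - x` preserves `μ01`. -/
lemma map_sub_eq : μ01.map (fun x : ℝ => 1 - x) = μ01 := by
  have hpre : (fun x : ℝ => 1 - x) ⁻¹' I01 = I01 := by
    ext x
    simp only [Set.mem_preimage, I01, Set.mem_Icc]
    constructor <;> rintro ⟨h1, h2⟩ <;> constructor <;> linarith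
  have hvol : volume.map (fun x : ℝ => 1 - x) = volume :=
    (Measure.measurePreserving_sub_left volume 1).map_eq
  rw [mu01_def]
  calc (volume.restrict I01).map (fun x : ℝ => 1 - x)
      = (volume.restrict ((fun x : ℝ => 1 - x) ⁻¹' I01)).map (fun x : ℝ => 1 - x) := by
        rw [hpre]
    _ = (volume.map (fun x : ℝ => 1 - x)).restrict I01 :=
        (Measure.restrict_map sub_meas I01_meas).symm
    _ = volume.restrict I01 := by rw [hvol]

lemma mp_sub : MeasurePreserving (fun x : ℝ => 1 - x) μ01 μ01 :=
  ⟨sub_meas, map_sub_eq⟩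

/-- Change of variables `x ↦ 1 - x` for integrals over `μ01`. -/
lemma emb_sub : MeasurableEmbedding (fun x : ℝ => 1 - x) := by
  have : (Homeomorph.subLeft (1:ℝ) : ℝ → ℝ) = fun x : ℝ => 1 - x := rfl
  exact this ▸ (Homeomorph.subLeft (1:ℝ)).measurableEmbedding

lemma integral_comp_sub (h : ℝ → ℝ) :
    ∫ x, h (1 - x) ∂μ01 = ∫ x, h x ∂μ01 :=
  mp_sub.integral_comp emb_sub h

lemma memℒp_comp_sub {g : ℝ → ℝ} (hg : MemLp g 2 μ01) :
    MemLp (fun x => g (1 - x)) 2 μ01 := by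
  have : AEStronglyMeasurable g (μ01.map (fun x : ℝ => 1 - x)) := by
    rw [map_sub_eq]; exact hg.1
  exact (memLp_map_measure_iff this sub_meas.aemeasurable).1 (by rw [map_sub_eq]; exact hg)

lemma diag_meas : Measurable (fun x : ℝ => (x, x)) :=
  measurable_id.prodMk measurable_id

lemma adiag_meas : Measurable (fun x : ℝ => (x, 1 - x)) :=
  measurable_id.prodMk sub_meas

lemma mp_fst_diag : MeasurePreserving Prod.fst (μ01.map (fun x : ℝ => (x, x))) μ01 := by
  refine ⟨measurable_fst, ?_⟩
  rw [Measure.map_map measurable_fst diag_meas]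
  simp [Function.comp_def]

lemma mp_snd_diag : MeasurePreserving Prod.snd (μ01.map (fun x : ℝ => (x, x))) μ01 := by
  refine ⟨measurable_snd, ?_⟩
  rw [Measure.map_map measurable_snd diag_meas]
  simp [Function.comp_def]

lemma mp_fst_adiag : MeasurePreserving Prod.fst (μ01.map (fun x : ℝ => (x, 1 - x))) μ01 := by
  refine ⟨measurable_fst, ?_⟩
  rw [Measure.map_map measurable_fst adiag_meas]
  simp [Function.comp_def]

lemma mp_snd_adiag : MeasurePreserving Prod.snd (μ01.map (fun x : ℝ => (x, 1 - x))) μ01 := by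
  refine ⟨measurable_snd, ?_⟩
  rw [Measure.map_map measurable_snd adiag_meas]
  simpa [Function.comp_def] using map_sub_eq

lemma aesm_diag {f g : ℝ → ℝ} (hf : AEStronglyMeasurable f μ01)
    (hg : AEStronglyMeasurable g μ01) :
    AEStronglyMeasurable (fun p : ℝ × ℝ => f p.1 * g p.2)
      (μ01.map (fun x : ℝ => (x, x))) :=
  (hf.comp_quasiMeasurePreserving mp_fst_diag.quasiMeasurePreserving).mul
    (hg.comp_quasiMeasurePreserving mp_snd_diag.quasiMeasurePreserving)

lemma aesm_adiag {f g : ℝ → ℝ} (hf : AEStronglyMeasurable f μ01)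
    (hg : AEStronglyMeasurable g μ01) :
    AEStronglyMeasurable (fun p : ℝ × ℝ => f p.1 * g p.2)
      (μ01.map (fun x : ℝ => (x, 1 - x))) :=
  (hf.comp_quasiMeasurePreserving mp_fst_adiag.quasiMeasurePreserving).mul
    (hg.comp_quasiMeasurePreserving mp_snd_adiag.quasiMeasurePreserving)

/-- The product of two `L²` functions is integrable. -/
lemma integrable_mul_L2 {f g : ℝ → ℝ} (hf : MemLp f 2 μ01) (hg : MemLp g 2 μ01) :
    Integrable (fun x => f x * g x) μ01 := by
  refine Integrable.mono' ((hf.integrable_sq.add hg.integrable_sq).div_const 2)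
    (hf.1.mul hg.1) ?_
  filter_upwards with x
  have h := abs_mul (f x) (g x)
  have h2 : 2 * |f x| * |g x| ≤ |f x| ^ 2 + |g x| ^ 2 := two_mul_le_add_sq _ _
  have : ‖f x * g x‖ = |f x| * |g x| := by rw [Real.norm_eq_abs, abs_mul]
  rw [this]
  simp only [Pi.add_apply]
  have hsq : |f x| ^ 2 = f x ^ 2 := sq_abs _
  have hsq' : |g x| ^ 2 = g x ^ 2 := sq_abs _
  nlinarith

lemma integral_mul_le_one {f g : ℝ → ℝ} (hf : MemLp f 2 μ01) (hg : MemLp g 2 μ01)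
    (hf2 : ∫ x, f x ^ 2 ∂μ01 = 1) (hg2 : ∫ x, g x ^ 2 ∂μ01 = 1) :
    ∫ x, f x * g x ∂μ01 ≤ 1 := by
  have hint : Integrable (fun x => (f x ^ 2 + g x ^ 2) / 2) μ01 :=
    (hf.integrable_sq.add hg.integrable_sq).div_const 2
  have hmono : ∫ x, f x * g x ∂μ01 ≤ ∫ x, (f x ^ 2 + g x ^ 2) / 2 ∂μ01 := by
    refine integral_mono (integrable_mul_L2 hf hg) hint fun x => ?_
    nlinarith [sq_nonneg (f x - g x)]
  calc ∫ x, f x * g x ∂μ01 ≤ ∫ x, (f x ^ 2 + g x ^ 2) / 2 ∂μ01 := hmono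
    _ = ((∫ x, f x ^ 2 ∂μ01) + ∫ x, g x ^ 2 ∂μ01) / 2 := by
        rw [integral_div, integral_add hf.integrable_sq hg.integrable_sq]
    _ = 1 := by rw [hf2, hg2]; norm_num

/-- Splitting of the integral over `muMW a`. -/
lemma integral_muMW_eq {a : ℝ} (ha0 : 0 ≤ a) (ha1 : a ≤ 1) {f g : ℝ → ℝ}
    (hf : MemLp f 2 μ01) (hg : MemLp g 2 μ01) :
    ∫ p, f p.1 * g p.2 ∂(muMW a) =
      a * (∫ x, f x * g x ∂μ01) + (1 - a) * (∫ x, f x * g (1 - x) ∂μ01) := by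
  have hId : Integrable (fun p : ℝ × ℝ => f p.1 * g p.2)
      (μ01.map (fun x : ℝ => (x, x))) := by
    rw [integrable_map_measure (aesm_diag hf.1 hg.1) diag_meas.aemeasurable]
    exact integrable_mul_L2 hf hg
  have hIa : Integrable (fun p : ℝ × ℝ => f p.1 * g p.2)
      (μ01.map (fun x : ℝ => (x, 1 - x))) := by
    rw [integrable_map_measure (aesm_adiag hf.1 hg.1) adiag_meas.aemeasurable]
    exact integrable_mul_L2 hf (memℒp_comp_sub hg)
  have hEd : ∫ p, f p.1 * g p.2 ∂(μ01.map (fun x : ℝ => (x, x))) =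
      ∫ x, f x * g x ∂μ01 :=
    integral_map diag_meas.aemeasurable (aesm_diag hf.1 hg.1)
  have hEa : ∫ p, f p.1 * g p.2 ∂(μ01.map (fun x : ℝ => (x, 1 - x))) =
      ∫ x, f x * g (1 - x) ∂μ01 :=
    integral_map adiag_meas.aemeasurable (aesm_adiag hf.1 hg.1)
  rw [muMW, integral_add_measure (hId.smul_measure ENNReal.ofReal_ne_top)
      (hIa.smul_measure ENNReal.ofReal_ne_top),
    integral_smul_measure, integral_smul_measure, ENNReal.toReal_ofReal ha0,
    ENNReal.toReal_ofReal (by linarith : (0:ℝ) ≤ 1 - a), hEd, hEa, smul_eq_mul, smul_eq_mul]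

/- ### Integrals of the cosine function -/

lemma int_cos_I01 : (∫ x in I01, Real.cos (2 * Real.pi * x)) = 0 := by
  rw [I01, MeasureTheory.integral_Icc_eq_integral_Ioc,
    ← intervalIntegral.integral_of_le zero_le_one,
    intervalIntegral.integral_comp_mul_left (fun x => Real.cos x)
      (by positivity : 2 * Real.pi ≠ 0)]
  simp [Real.sin_two_pi]

lemma int_cos_sq_I01 : (∫ x in I01, Real.cos (2 * Real.pi * x) ^ 2) = 1 / 2 := by
  rw [I01, MeasureTheory.integral_Icc_eq_integral_Ioc,
    ← intervalIntegral.integral_of_le zero_le_one,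
    intervalIntegral.integral_comp_mul_left (fun x => Real.cos x ^ 2)
      (by positivity : 2 * Real.pi ≠ 0)]
  simp [Real.sin_two_pi, Real.cos_two_pi]
  field_simp

lemma cos_sub_arg (x : ℝ) :
    Real.cos (2 * Real.pi * (1 - x)) = Real.cos (2 * Real.pi * x) := by
  have : 2 * Real.pi * (1 - x) = 2 * Real.pi - 2 * Real.pi * x := by ring
  rw [this, Real.cos_sub, Real.cos_two_pi, Real.sin_two_pi]
  ring

lemma memℒp_sqrt2_cos :
    MemLp (fun x => Real.sqrt 2 * Real.cos (2 * Real.pi * x)) 2 μ01 := by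
  refine MemLp.of_bound ?_ (Real.sqrt 2) ?_
  · exact (Continuous.mul continuous_const
      (Real.continuous_cos.comp (continuous_const.mul continuous_id))).aestronglyMeasurable
  · filter_upwards with x
    rw [Real.norm_eq_abs, abs_mul, abs_of_nonneg (Real.sqrt_nonneg 2)]
    have h1 : |Real.cos (2 * Real.pi * x)| ≤ 1 := Real.abs_cos_le_one _
    nlinarith [Real.sqrt_nonneg 2]

lemma int_f_eq_zero :
    (∫ x in I01, Real.sqrt 2 * Real.cos (2 * Real.pi * x)) = 0 := by
  rw [integral_const_mul, int_cos_I01, mul_zero]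

lemma int_f_sq_eq_one :
    (∫ x in I01, (Real.sqrt 2 * Real.cos (2 * Real.pi * x)) ^ 2) = 1 := by
  have h2 : Real.sqrt 2 ^ 2 = 2 := Real.sq_sqrt (by norm_num)
  have : ∀ x : ℝ, (Real.sqrt 2 * Real.cos (2 * Real.pi * x)) ^ 2 =
      2 * Real.cos (2 * Real.pi * x) ^ 2 := by
    intro x; rw [mul_pow, h2]
  simp_rw [this]
  rw [integral_const_mul, int_cos_sq_I01]
  norm_num

lemma int_f_mul_f : (∫ x, (Real.sqrt 2 * Real.cos (2 * Real.pi * x)) *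
    (Real.sqrt 2 * Real.cos (2 * Real.pi * x)) ∂μ01) = 1 := by
  have : ∀ x : ℝ, (Real.sqrt 2 * Real.cos (2 * Real.pi * x)) *
      (Real.sqrt 2 * Real.cos (2 * Real.pi * x)) =
      (Real.sqrt 2 * Real.cos (2 * Real.pi * x)) ^ 2 := fun x => (sq _).symm
  simp_rw [this]
  exact int_f_sq_eq_one

lemma int_f_muMW {a : ℝ} (ha0 : 0 ≤ a) (ha1 : a ≤ 1) :
    (∫ p, (Real.sqrt 2 * Real.cos (2 * Real.pi * p.1)) *
        (Real.sqrt 2 * Real.cos (2 * Real.pi * p.2)) ∂(muMW a)) = 1 := by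
  rw [integral_muMW_eq ha0 ha1 memℒp_sqrt2_cos memℒp_sqrt2_cos]
  have hdiag := int_f_mul_f
  have hanti : (∫ x, (Real.sqrt 2 * Real.cos (2 * Real.pi * x)) *
      (Real.sqrt 2 * Real.cos (2 * Real.pi * (1 - x))) ∂μ01) = 1 := by
    simp_rw [cos_sub_arg]
    exact int_f_mul_f
  rw [hdiag, hanti]
  ring

/-- For `a ∈ [0,1]` and `μ_a` the copula measure of
`a M + (1−a) W`, the function `f(x) = √2·cos(2πx)` satisfies `∫₀¹ f = 0`,
`∫₀¹ f² = 1` and `∫ f(x) f(y) μ_a(d(x,y)) = 1`.  Hence the maximal correlation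
coefficient `ρ₁` of `μ_a` equals `1`, so Markov chains generated by copulas of
the form `a M + (1−a) W` are not `ρ`-mixing. -/
theorem convex_MW_not_rho_mixing (a : ℝ) (ha : a ∈ Set.Icc (0 : ℝ) 1) :
    (∫ x in I01, Real.sqrt 2 * Real.cos (2 * Real.pi * x)) = 0 ∧
    (∫ x in I01, (Real.sqrt 2 * Real.cos (2 * Real.pi * x)) ^ 2) = 1 ∧
    (∫ p, (Real.sqrt 2 * Real.cos (2 * Real.pi * p.1)) *
        (Real.sqrt 2 * Real.cos (2 * Real.pi * p.2)) ∂(muMW a)) = 1 ∧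
    sSup {r : ℝ | ∃ f g : ℝ → ℝ, MemLp f 2 μ01 ∧ MemLp g 2 μ01 ∧
        (∫ x in I01, f x) = 0 ∧ (∫ x in I01, g x) = 0 ∧
        (∫ x in I01, f x ^ 2) = 1 ∧ (∫ x in I01, g x ^ 2) = 1 ∧
        r = ∫ p, f p.1 * g p.2 ∂(muMW a)} = 1 := by
  obtain ⟨ha0, ha1⟩ := ha
  refine ⟨int_f_eq_zero, int_f_sq_eq_one, int_f_muMW ha0 ha1, ?_⟩
  set S : Set ℝ := {r : ℝ | ∃ f g : ℝ → ℝ, MemLp f 2 μ01 ∧ MemLp g 2 μ01 ∧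
      (∫ x in I01, f x) = 0 ∧ (∫ x in I01, g x) = 0 ∧
      (∫ x in I01, f x ^ 2) = 1 ∧ (∫ x in I01, g x ^ 2) = 1 ∧
      r = ∫ p, f p.1 * g p.2 ∂(muMW a)} with hS
  have hmem : (1 : ℝ) ∈ S := by
    refine ⟨fun x => Real.sqrt 2 * Real.cos (2 * Real.pi * x),
      fun x => Real.sqrt 2 * Real.cos (2 * Real.pi * x),
      memℒp_sqrt2_cos, memℒp_sqrt2_cos, int_f_eq_zero, int_f_eq_zero,
      int_f_sq_eq_one, int_f_sq_eq_one, (int_f_muMW ha0 ha1).symm⟩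
  have hub : ∀ r ∈ S, r ≤ 1 := by
    rintro r ⟨f, g, hf, hg, _, _, hf2, hg2, rfl⟩
    have hf2' : ∫ x, f x ^ 2 ∂μ01 = 1 := hf2
    have hg2' : ∫ x, g x ^ 2 ∂μ01 = 1 := hg2
    have hg' : MemLp (fun x => g (1 - x)) 2 μ01 := memℒp_comp_sub hg
    have hg2'' : ∫ x, (fun x => g (1 - x)) x ^ 2 ∂μ01 = 1 := by
      have := integral_comp_sub (fun x => g x ^ 2)
      simpa [this] using hg2'
    have hA : ∫ x, f x * g x ∂μ01 ≤ 1 := integral_mul_le_one hf hg hf2' hg2'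
    have hB : ∫ x, f x * g (1 - x) ∂μ01 ≤ 1 :=
      integral_mul_le_one hf hg' hf2' hg2''
    rw [integral_muMW_eq ha0 ha1 hf hg]
    nlinarith
  exact le_antisymm (csSup_le ⟨1, hmem⟩ hub) (le_csSup ⟨1, hub⟩ hmem)
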